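/- For every ε > 0, every finite nonempty sets P, I, and every G : P × I → [0,1], if k > ln|I|/(2ε²) and k' > ln|P|/(2ε²), then there exist a multiset S of k elements of P and a multiset T of k' elements of I such that max_j (1/k)Σ_{i∈S} G(i,j) − min_i (1/k')Σ_{j∈T} G(i,j) < 2ε. -/

import Mathlib

open Finset

set_option linter.unusedSectionVars false
set_option linter.unusedVariables false
set_option linter.deprecated false

/-- Scalar core of Hoeffding's lemma. -/
lemma hoeff_scalar (μ : ℝ) (h0 : 0 ≤ μ) (h1 : μ ≤ 1) (t : ℝ) :
    1 - μ + μ * Real.exp t ≤ Real.exp (t * μ + t ^ 2 / 8) := by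
  have hD : ∀ s : ℝ, 0 < 1 - μ + μ * Real.exp s := by
    intro s
    rcases eq_or_lt_of_le h0 with h | h
    · rw [← h]; norm_num
    · have := Real.exp_pos s
      nlinarith
  set F : ℝ → ℝ := fun s => s * μ + s ^ 2 / 8 - Real.log (1 - μ + μ * Real.exp s) with hFdef
  set F' : ℝ → ℝ := fun s => μ + s / 4 - μ * Real.exp s / (1 - μ + μ * Real.exp s) with hF'def
  have hDder : ∀ s : ℝ, HasDerivAt (fun s => 1 - μ + μ * Real.exp s) (μ * Real.exp s) s :=
    fun s => ((Real.hasDerivAt_exp s).const_mul μ).const_add (1 - μ)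
  have hF : ∀ s : ℝ, HasDerivAt F (F' s) s := by
    intro s
    have h2 : HasDerivAt (fun s => Real.log (1 - μ + μ * Real.exp s))
        (μ * Real.exp s / (1 - μ + μ * Real.exp s)) s := (hDder s).log (ne_of_gt (hD s))
    have ha : HasDerivAt (fun s : ℝ => s * μ) μ s := hasDerivAt_mul_const μ
    have hb : HasDerivAt (fun s : ℝ => s ^ 2 / 8) (s / 4) s := by
      have := (hasDerivAt_pow 2 s).div_const 8
      exact this.congr_deriv (by norm_num; ring)
    exact (ha.add hb).sub h2
  have hF'' : ∀ s : ℝ, HasDerivAt F'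
      (1 / 4 - μ * Real.exp s * (1 - μ) / (1 - μ + μ * Real.exp s) ^ 2) s := by
    intro s
    have hq : HasDerivAt (fun s => μ * Real.exp s / (1 - μ + μ * Real.exp s))
        ((μ * Real.exp s * (1 - μ + μ * Real.exp s) - μ * Real.exp s * (μ * Real.exp s)) /
          (1 - μ + μ * Real.exp s) ^ 2) s :=
      ((Real.hasDerivAt_exp s).const_mul μ).div (hDder s) (ne_of_gt (hD s))
    have ha : HasDerivAt (fun s : ℝ => μ + s / 4) (1 / 4) s := by
      simpa using ((hasDerivAt_id s).div_const 4).const_add μ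
    have := ha.sub hq
    exact this.congr_deriv (by ring)
  have hmono : Monotone F' := by
    apply monotone_of_deriv_nonneg
    · exact fun s => (hF'' s).differentiableAt
    · intro s
      rw [(hF'' s).deriv, sub_nonneg, div_le_iff₀ (pow_pos (hD s) 2)]
      nlinarith [Real.exp_pos s, sq_nonneg (1 - μ - μ * Real.exp s)]
  have hF'0 : F' 0 = 0 := by
    have h : (1 : ℝ) - μ + μ * Real.exp 0 = 1 := by rw [Real.exp_zero]; ring
    simp only [hF'def, h, Real.exp_zero]
    norm_num
  have hF0 : F 0 = 0 := by
    have h : (1 : ℝ) - μ + μ * Real.exp 0 = 1 := by rw [Real.exp_zero]; ring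
    simp only [hFdef, h, Real.log_one]
    norm_num
  have key : 0 ≤ F t := by
    rcases le_total 0 t with ht | ht
    · have hm : MonotoneOn F (Set.Ici (0 : ℝ)) := by
        apply monotoneOn_of_deriv_nonneg (convex_Ici 0)
          (fun s _ => (hF s).continuousAt.continuousWithinAt)
          (fun s _ => (hF s).differentiableAt.differentiableWithinAt)
        intro s hs
        rw [interior_Ici] at hs
        rw [(hF s).deriv]
        have := hmono (le_of_lt hs)
        rw [hF'0] at this
        exact this
      have := hm (Set.self_mem_Ici) (Set.mem_Ici.mpr ht) ht
      rwa [hF0] at this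
    · have hm : AntitoneOn F (Set.Iic (0 : ℝ)) := by
        apply antitoneOn_of_deriv_nonpos (convex_Iic 0)
          (fun s _ => (hF s).continuousAt.continuousWithinAt)
          (fun s _ => (hF s).differentiableAt.differentiableWithinAt)
        intro s hs
        rw [interior_Iic] at hs
        rw [(hF s).deriv]
        have := hmono (le_of_lt hs)
        rw [hF'0] at this
        exact this
      have := hm (Set.mem_Iic.mpr ht) (Set.self_mem_Iic) ht
      rwa [hF0] at this
  have hlog : Real.log (1 - μ + μ * Real.exp t) ≤ t * μ + t ^ 2 / 8 := by
    have : F t = t * μ + t ^ 2 / 8 - Real.log (1 - μ + μ * Real.exp t) := rfl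
    linarith [key, this ▸ key]
  calc 1 - μ + μ * Real.exp t = Real.exp (Real.log (1 - μ + μ * Real.exp t)) :=
        (Real.exp_log (hD t)).symm
    _ ≤ Real.exp (t * μ + t ^ 2 / 8) := Real.exp_le_exp.2 hlog

/-- Weighted discrete Hoeffding mgf bound. -/
lemma mgf_bound {ι : Type*} [Fintype ι] (y : ι → ℝ) (hy : ∀ j, 0 ≤ y j)
    (hy1 : ∑ j, y j = 1) (g : ι → ℝ) (hg : ∀ j, g j ∈ Set.Icc (0 : ℝ) 1) (t : ℝ) :
    ∑ j, y j * Real.exp (t * g j) ≤ Real.exp (t * (∑ j, y j * g j) + t ^ 2 / 8) := by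
  set μ := ∑ j, y j * g j with hμ
  have hμ0 : 0 ≤ μ := Finset.sum_nonneg fun j _ => mul_nonneg (hy j) (hg j).1
  have hμ1 : μ ≤ 1 := by
    calc μ ≤ ∑ j, y j * 1 := Finset.sum_le_sum fun j _ =>
          mul_le_mul_of_nonneg_left (hg j).2 (hy j)
      _ = 1 := by simp [hy1]
  have hconv : ∀ j, Real.exp (t * g j) ≤ 1 - g j + g j * Real.exp t := by
    intro j
    have h := convexOn_exp.2 (Set.mem_univ (0 : ℝ)) (Set.mem_univ t)
      (by linarith [(hg j).2] : (0:ℝ) ≤ 1 - g j) (hg j).1 (by ring)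
    simp only [smul_eq_mul, mul_zero, zero_add, Real.exp_zero, mul_one] at h
    calc Real.exp (t * g j) = Real.exp (g j * t) := by rw [mul_comm]
      _ ≤ 1 - g j + g j * Real.exp t := by linarith
  calc ∑ j, y j * Real.exp (t * g j)
      ≤ ∑ j, y j * (1 - g j + g j * Real.exp t) :=
        Finset.sum_le_sum fun j _ => mul_le_mul_of_nonneg_left (hconv j) (hy j)
    _ = (∑ j, y j) - μ + μ * Real.exp t := by
        rw [hμ, Finset.sum_mul, ← Finset.sum_sub_distrib, ← Finset.sum_add_distrib]
        apply Finset.sum_congr rfl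
        intro j _
        ring
    _ = 1 - μ + μ * Real.exp t := by rw [hy1]
    _ ≤ Real.exp (t * μ + t ^ 2 / 8) := hoeff_scalar μ hμ0 hμ1 t

section MW

variable {A B : Type*} [Fintype A] [Fintype B] [Nonempty A] [Nonempty B]

noncomputable def pick (H : A → B → ℝ) (w : B → ℝ) : A :=
  (Finset.exists_min_image (Finset.univ : Finset A) (fun i => ∑ j, w j * H i j)
    Finset.univ_nonempty).choose

lemma pick_le (H : A → B → ℝ) (w : B → ℝ) (i : A) :
    ∑ j, w j * H (pick H w) j ≤ ∑ j, w j * H i j :=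
  (Finset.exists_min_image (Finset.univ : Finset A) (fun i => ∑ j, w j * H i j)
    Finset.univ_nonempty).choose_spec.2 i (Finset.mem_univ i)

noncomputable def cum (H : A → B → ℝ) (η : ℝ) : ℕ → B → ℝ
  | 0 => fun _ => 0
  | (t+1) => fun j =>
      cum H η t j + H (pick H (fun j' => Real.exp (η * cum H η t j'))) j

noncomputable def mwSeq (H : A → B → ℝ) (η : ℝ) (t : ℕ) : A :=
  pick H (fun j => Real.exp (η * cum H η t j))

noncomputable def mwZ (H : A → B → ℝ) (η : ℝ) (t : ℕ) : ℝ :=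
  ∑ j, Real.exp (η * cum H η t j)

noncomputable def ymix (H : A → B → ℝ) (η : ℝ) (t : ℕ) (j : B) : ℝ :=
  Real.exp (η * cum H η t j) / mwZ H η t

noncomputable def mval (H : A → B → ℝ) (η : ℝ) (t : ℕ) : ℝ :=
  ∑ j, ymix H η t j * H (mwSeq H η t) j

lemma mwZ_pos (H : A → B → ℝ) (η : ℝ) (t : ℕ) : 0 < mwZ H η t :=
  Finset.sum_pos (fun j _ => Real.exp_pos _) Finset.univ_nonempty

lemma ymix_nonneg (H : A → B → ℝ) (η : ℝ) (t : ℕ) (j : B) : 0 ≤ ymix H η t j :=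
  div_nonneg (Real.exp_pos _).le (mwZ_pos H η t).le

lemma ymix_sum (H : A → B → ℝ) (η : ℝ) (t : ℕ) : ∑ j, ymix H η t j = 1 := by
  simp only [ymix, ← Finset.sum_div]
  exact div_self (ne_of_gt (mwZ_pos H η t))

lemma mval_le (H : A → B → ℝ) (η : ℝ) (t : ℕ) (i : A) :
    mval H η t ≤ ∑ j, ymix H η t j * H i j := by
  have hZ := mwZ_pos H η t
  simp only [mval, ymix, div_mul_eq_mul_div, ← Finset.sum_div]
  exact (div_le_div_iff_of_pos_right hZ).2 (pick_le H _ i)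

lemma cum_eq (H : A → B → ℝ) (η : ℝ) (N : ℕ) (j : B) :
    cum H η N j = ∑ t ∈ Finset.range N, H (mwSeq H η t) j := by
  induction N with
  | zero => simp [cum]
  | succ n ih => rw [Finset.sum_range_succ, ← ih]; rfl

lemma logZ_le (H : A → B → ℝ) (hH : ∀ i j, H i j ∈ Set.Icc (0 : ℝ) 1) (η : ℝ) (N : ℕ) :
    Real.log (mwZ H η N) ≤
      Real.log (Fintype.card B) + η * (∑ t ∈ Finset.range N, mval H η t) + N * (η ^ 2 / 8) := by
  induction N with
  | zero =>
      simp [mwZ, cum, Finset.card_univ]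
  | succ n ih =>
      have hZ := mwZ_pos H η n
      have expand : mwZ H η (n+1) =
          mwZ H η n * ∑ j, ymix H η n j * Real.exp (η * H (mwSeq H η n) j) := by
        rw [Finset.mul_sum]
        apply Finset.sum_congr rfl
        intro j _
        have h1 : cum H η (n+1) j = cum H η n j + H (mwSeq H η n) j := rfl
        rw [h1, mul_add, Real.exp_add, ymix]
        rw [div_mul_eq_mul_div, mul_div_assoc']
        rw [mul_comm (mwZ H η n), mul_div_assoc, div_self (ne_of_gt hZ), mul_one]
      have hmgf : ∑ j, ymix H η n j * Real.exp (η * H (mwSeq H η n) j) ≤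
          Real.exp (η * mval H η n + η ^ 2 / 8) :=
        mgf_bound (ymix H η n) (ymix_nonneg H η n) (ymix_sum H η n)
          (fun j => H (mwSeq H η n) j) (fun j => hH _ j) η
      have hstep : mwZ H η (n+1) ≤ mwZ H η n * Real.exp (η * mval H η n + η ^ 2 / 8) := by
        rw [expand]; exact mul_le_mul_of_nonneg_left hmgf hZ.le
      calc Real.log (mwZ H η (n+1))
          ≤ Real.log (mwZ H η n * Real.exp (η * mval H η n + η ^ 2 / 8)) :=
            Real.log_le_log (mwZ_pos H η (n+1)) hstep
        _ = Real.log (mwZ H η n) + (η * mval H η n + η ^ 2 / 8) := by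
            rw [Real.log_mul (ne_of_gt hZ) (Real.exp_ne_zero _), Real.log_exp]
        _ ≤ Real.log (Fintype.card B) + η * (∑ t ∈ Finset.range (n+1), mval H η t)
              + (n+1 : ℕ) * (η ^ 2 / 8) := by
            rw [Finset.sum_range_succ]
            push_cast
            linarith [ih]

lemma mw_regret (H : A → B → ℝ) (hH : ∀ i j, H i j ∈ Set.Icc (0 : ℝ) 1)
    (η : ℝ) (hη : 0 < η) (N : ℕ) (j : B) :
    ∑ t ∈ Finset.range N, H (mwSeq H η t) j ≤
      Real.log (Fintype.card B) / η + (∑ t ∈ Finset.range N, mval H η t) + N * η / 8 := by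
  have h1 : η * cum H η N j ≤ Real.log (mwZ H η N) := by
    rw [← Real.log_exp (η * cum H η N j)]
    apply Real.log_le_log (Real.exp_pos _)
    rw [mwZ]
    exact Finset.single_le_sum (f := fun b => Real.exp (η * cum H η N b))
      (fun b _ => (Real.exp_pos _).le) (Finset.mem_univ j)
  have h2 := logZ_le H hH η N
  rw [cum_eq] at h1
  set X := ∑ t ∈ Finset.range N, H (mwSeq H η t) j
  set M := ∑ t ∈ Finset.range N, mval H η t
  set L := Real.log (Fintype.card B)
  have h5 : η * X ≤ L + η * M + N * (η ^ 2 / 8) := le_trans h1 h2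
  have hXle : X ≤ (L + η * M + N * (η ^ 2 / 8)) / η := by
    rw [le_div_iff₀ hη]
    linarith
  calc X ≤ (L + η * M + N * (η ^ 2 / 8)) / η := hXle
    _ = L / η + M + N * η / 8 := by
        field_simp

end MW

theorem two_sided_simple_strategies {P I : Type*} [Fintype P] [Fintype I]
    [Nonempty P] [Nonempty I]
    (G : P → I → ℝ) (hG : ∀ i j, G i j ∈ Set.Icc (0 : ℝ) 1)
    (ε : ℝ) (hε : 0 < ε) (k k' : ℕ) (hk : 0 < k) (hk' : 0 < k')
    (hkI : Real.log (Fintype.card I) / (2 * ε ^ 2) < k)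
    (hkP : Real.log (Fintype.card P) / (2 * ε ^ 2) < k') :
    ∃ S : Fin k → P, ∃ T : Fin k' → I,
      (⨆ j : I, (1 / k : ℝ) * ∑ m, G (S m) j) -
        (⨅ i : P, (1 / k' : ℝ) * ∑ n, G i (T n)) < 2 * ε := by
  set η : ℝ := 4 * ε with hηdef
  have hη : 0 < η := by positivity
  set H₂ : I → P → ℝ := fun j i => 1 - G i j with hH₂def
  have hH₂ : ∀ j i, H₂ j i ∈ Set.Icc (0 : ℝ) 1 := by
    intro j i
    constructor
    · simp only [hH₂def]; linarith [(hG i j).2]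
    · simp only [hH₂def]; linarith [(hG i j).1]
  refine ⟨fun m => mwSeq G η (m : ℕ), fun n => mwSeq H₂ η (n : ℕ), ?_⟩
  set c : ℝ := (k : ℝ) with hcdef
  set c' : ℝ := (k' : ℝ) with hc'def
  have hc : 0 < c := by rw [hcdef]; exact_mod_cast hk
  have hc' : 0 < c' := by rw [hc'def]; exact_mod_cast hk'
  set Sm1 : ℝ := ∑ t ∈ Finset.range k, mval G η t with hSm1
  set Sm2 : ℝ := ∑ s ∈ Finset.range k', mval H₂ η s with hSm2
  set Lg1 : ℝ := Real.log (Fintype.card I) / η with hLg1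
  set Lg2 : ℝ := Real.log (Fintype.card P) / η with hLg2
  -- upper bound on sup
  have hsup : (⨆ j : I, (1 / c) * ∑ m : Fin k, G (mwSeq G η (m : ℕ)) j) ≤
      (1 / c) * (Lg1 + Sm1 + k * η / 8) := by
    apply ciSup_le
    intro j
    apply mul_le_mul_of_nonneg_left _ (by positivity)
    have := mw_regret G hG η hη k j
    calc ∑ m : Fin k, G (mwSeq G η (m : ℕ)) j
        = ∑ t ∈ Finset.range k, G (mwSeq G η t) j := Fin.sum_univ_eq_sum_range (fun t => G (mwSeq G η t) j) k
      _ ≤ Lg1 + Sm1 + k * η / 8 := by rw [hLg1, hSm1]; linarith [this]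
  -- lower bound on inf
  have hinf : (1 / c') * (c' - Lg2 - Sm2 - k' * η / 8) ≤
      ⨅ i : P, (1 / c') * ∑ n : Fin k', G i (mwSeq H₂ η (n : ℕ)) := by
    apply le_ciInf
    intro i
    apply mul_le_mul_of_nonneg_left _ (by positivity)
    have hreg := mw_regret H₂ hH₂ η hη k' i
    have hsum : ∑ s ∈ Finset.range k', H₂ (mwSeq H₂ η s) i
        = c' - ∑ s ∈ Finset.range k', G i (mwSeq H₂ η s) := by
      simp only [hH₂def]
      rw [Finset.sum_sub_distrib]
      simp [hc'def]
    have hfin : ∑ n : Fin k', G i (mwSeq H₂ η (n : ℕ))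
        = ∑ s ∈ Finset.range k', G i (mwSeq H₂ η s) := Fin.sum_univ_eq_sum_range (fun s => G i (mwSeq H₂ η s)) k'
    rw [hfin]
    rw [hsum] at hreg
    rw [hLg2, hSm2]
    linarith [hreg]
  -- bridge
  have pair : ∀ t s : ℕ, mval G η t + mval H₂ η s ≤ 1 := by
    intro t s
    set y : I → ℝ := ymix G η t with hy
    set x : P → ℝ := ymix H₂ η s with hx
    have hy0 : ∀ j, 0 ≤ y j := ymix_nonneg G η t
    have hx0 : ∀ i, 0 ≤ x i := ymix_nonneg H₂ η s
    have hy1 : ∑ j, y j = 1 := ymix_sum G η t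
    have hx1 : ∑ i, x i = 1 := ymix_sum H₂ η s
    have q1 : mval G η t ≤ ∑ i, x i * (∑ j, y j * G i j) := by
      have e1 : mval G η t = ∑ i, x i * mval G η t := by
        rw [← Finset.sum_mul, hx1, one_mul]
      rw [e1]
      exact Finset.sum_le_sum fun i _ =>
        mul_le_mul_of_nonneg_left (mval_le G η t i) (hx0 i)
    have q2 : mval H₂ η s ≤ ∑ j, y j * (∑ i, x i * H₂ j i) := by
      have e1 : mval H₂ η s = ∑ j, y j * mval H₂ η s := by
        rw [← Finset.sum_mul, hy1, one_mul]
      rw [e1]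
      exact Finset.sum_le_sum fun j _ =>
        mul_le_mul_of_nonneg_left (mval_le H₂ η s j) (hy0 j)
    have swap : ∑ i, x i * (∑ j, y j * G i j) = ∑ j, y j * (∑ i, x i * G i j) := by
      simp only [Finset.mul_sum]
      rw [Finset.sum_comm]
      apply Finset.sum_congr rfl
      intro j _
      apply Finset.sum_congr rfl
      intro i _
      ring
    have expand : ∑ j, y j * (∑ i, x i * H₂ j i) = 1 - ∑ j, y j * (∑ i, x i * G i j) := by
      have hinner : ∀ j, ∑ i, x i * H₂ j i = 1 - ∑ i, x i * G i j := by
        intro j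
        simp only [hH₂def, mul_sub, mul_one]
        rw [Finset.sum_sub_distrib, hx1]
      simp only [hinner, mul_sub, mul_one]
      rw [Finset.sum_sub_distrib, hy1]
    rw [swap] at q1
    rw [expand] at q2
    linarith
  have hbridge : c' * Sm1 + c * Sm2 ≤ c * c' := by
    have h1 : ∑ t ∈ Finset.range k, ∑ s ∈ Finset.range k',
        (mval G η t + mval H₂ η s) ≤ ∑ t ∈ Finset.range k, ∑ s ∈ Finset.range k', (1:ℝ) :=
      Finset.sum_le_sum fun t _ => Finset.sum_le_sum fun s _ => pair t s
    have h2 : ∑ t ∈ Finset.range k, ∑ s ∈ Finset.range k', (mval G η t + mval H₂ η s)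
        = c' * Sm1 + c * Sm2 := by
      simp only [Finset.sum_add_distrib, Finset.sum_const, Finset.card_range,
        nsmul_eq_mul, ← Finset.sum_mul, ← Finset.mul_sum]
      rfl
    have h3 : ∑ t ∈ Finset.range k, ∑ s ∈ Finset.range k', (1:ℝ) = c * c' := by
      simp [Finset.sum_const, Finset.card_range, hcdef, hc'def]
    rw [h2, h3] at h1
    exact h1
  -- numeric endgame
  have hA : Lg1 < ε * c / 2 := by
    rw [hLg1, hηdef, div_lt_iff₀ (by positivity)]
    rw [div_lt_iff₀ (by positivity : (0:ℝ) < 2 * ε ^ 2)] at hkI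
    nlinarith [hkI]
  have hB : Lg2 < ε * c' / 2 := by
    rw [hLg2, hηdef, div_lt_iff₀ (by positivity)]
    rw [div_lt_iff₀ (by positivity : (0:ℝ) < 2 * ε ^ 2)] at hkP
    nlinarith [hkP]
  have key : (1 / c) * (Lg1 + Sm1 + k * η / 8) - (1 / c') * (c' - Lg2 - Sm2 - k' * η / 8)
      < 2 * ε := by
    have hck : (k : ℝ) = c := rfl
    have hck' : (k' : ℝ) = c' := rfl
    rw [hck, hck', hηdef]
    have hkey2 : c' * (Lg1 + Sm1 + c * (4*ε) / 8) - c * (c' - Lg2 - Sm2 - c' * (4*ε) / 8)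
        < 2 * ε * (c * c') := by
      nlinarith [mul_lt_mul_of_pos_left hA hc', mul_lt_mul_of_pos_left hB hc, hbridge]
    have heq : (1 / c) * (Lg1 + Sm1 + c * (4*ε) / 8) - (1 / c') * (c' - Lg2 - Sm2 - c' * (4*ε) / 8)
        = (c' * (Lg1 + Sm1 + c * (4*ε) / 8) - c * (c' - Lg2 - Sm2 - c' * (4*ε) / 8)) / (c * c') := by
      field_simp
    rw [heq, div_lt_iff₀ (by positivity)]
    exact hkey2
  calc (⨆ j : I, (1 / c) * ∑ m : Fin k, G (mwSeq G η (m : ℕ)) j) -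
        (⨅ i : P, (1 / c') * ∑ n : Fin k', G i (mwSeq H₂ η (n : ℕ)))
      ≤ (1 / c) * (Lg1 + Sm1 + k * η / 8) - (1 / c') * (c' - Lg2 - Sm2 - k' * η / 8) :=
        sub_le_sub hsup hinf
    _ < 2 * ε := key
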